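/- Let G be a finite abelian group generated by elements h₁, h₂, h₃ ∈ G. Define the linear map d : ℂ[G]⁴ → ℂ[G]² by d(a,b,c,d) = (a+b+c+d, a + h₁·b + h₂·c + h₃·d), where multiplication is in the group algebra. Then the image of d has dimension 2|G| - 1 and the kernel of d has dimension 2|G| + 1 over ℂ. -/

import Mathlib

open MonoidAlgebra

noncomputable def pillowD (G : Type*) [CommGroup G] (h1 h2 h3 : G) :
    (MonoidAlgebra ℂ G × MonoidAlgebra ℂ G × MonoidAlgebra ℂ G × MonoidAlgebra ℂ G) →ₗ[ℂ]
      (MonoidAlgebra ℂ G × MonoidAlgebra ℂ G) where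
  toFun x := (x.1 + x.2.1 + x.2.2.1 + x.2.2.2,
    x.1 + MonoidAlgebra.of ℂ G h1 * x.2.1 + MonoidAlgebra.of ℂ G h2 * x.2.2.1
      + MonoidAlgebra.of ℂ G h3 * x.2.2.2)
  map_add' x y := by
    simp only [Prod.fst_add, Prod.snd_add, Prod.mk_add_mk, Prod.mk.injEq, mul_add]
    constructor <;> ring
  map_smul' c x := by
    simp only [Prod.smul_fst, Prod.smul_snd, Prod.smul_mk, RingHom.id_apply, smul_add,
      mul_smul_comm, Prod.mk.injEq]

section Aux

variable (G : Type*) [CommGroup G]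

/-- The augmentation map as an algebra hom. -/
noncomputable def augA : MonoidAlgebra ℂ G →ₐ[ℂ] ℂ := MonoidAlgebra.lift ℂ ℂ G 1

/-- The augmentation map as a linear map. -/
noncomputable def augE : MonoidAlgebra ℂ G →ₗ[ℂ] ℂ := (augA G).toLinearMap

lemma augE_single (g : G) (c : ℂ) : augE G (MonoidAlgebra.single g c) = c := by
  simp [augE, augA, MonoidAlgebra.lift_single]

lemma augE_of (g : G) : augE G (MonoidAlgebra.of ℂ G g) = 1 := by
  simpa using augE_single G g 1

lemma augE_one : augE G (1 : MonoidAlgebra ℂ G) = 1 := by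
  rw [← map_one (MonoidAlgebra.of ℂ G)]; exact augE_of G 1

lemma augE_mul_of (g : G) (x : MonoidAlgebra ℂ G) :
    augE G (MonoidAlgebra.of ℂ G g * x) = augE G x := by
  show augA G (MonoidAlgebra.of ℂ G g * x) = augA G x
  rw [map_mul]
  have h1 : augA G (MonoidAlgebra.of ℂ G g) = 1 := augE_of G g
  rw [h1, one_mul]

/-- The auxiliary map (b,c,d) ↦ (h1-1)b + (h2-1)c + (h3-1)d. -/
noncomputable def Tmap (h1 h2 h3 : G) :
    (MonoidAlgebra ℂ G × MonoidAlgebra ℂ G × MonoidAlgebra ℂ G) →ₗ[ℂ] MonoidAlgebra ℂ G where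
  toFun x := (MonoidAlgebra.of ℂ G h1 - 1) * x.1 + (MonoidAlgebra.of ℂ G h2 - 1) * x.2.1
      + (MonoidAlgebra.of ℂ G h3 - 1) * x.2.2
  map_add' x y := by
    simp only [Prod.fst_add, Prod.snd_add, mul_add]; ring
  map_smul' c x := by
    simp only [Prod.smul_fst, Prod.smul_snd, RingHom.id_apply, smul_add, mul_smul_comm]

variable (h1 h2 h3 : G)

lemma mul_mem_rangeT (r z : MonoidAlgebra ℂ G) (hz : z ∈ LinearMap.range (Tmap G h1 h2 h3)) :
    r * z ∈ LinearMap.range (Tmap G h1 h2 h3) := by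
  obtain ⟨⟨b, c, d⟩, rfl⟩ := hz
  exact ⟨(r * b, r * c, r * d), by simp only [Tmap, LinearMap.coe_mk, AddHom.coe_mk]; ring⟩

lemma of_sub_one_mem (hgen : Subgroup.closure {h1, h2, h3} = ⊤) (g : G) :
    (MonoidAlgebra.of ℂ G g : MonoidAlgebra ℂ G) - 1 ∈ LinearMap.range (Tmap G h1 h2 h3) := by
  have hg : g ∈ Subgroup.closure {h1, h2, h3} := hgen ▸ Subgroup.mem_top g
  induction hg using Subgroup.closure_induction with
  | mem x hx =>
    rcases hx with rfl | rfl | rfl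
    · exact ⟨(1, 0, 0), by simp [Tmap]⟩
    · exact ⟨(0, 1, 0), by simp [Tmap]⟩
    · exact ⟨(0, 0, 1), by simp only [Tmap, LinearMap.coe_mk, AddHom.coe_mk, mul_zero, mul_one, zero_add]⟩
  | one =>
    have h : (MonoidAlgebra.of ℂ G (1 : G) : MonoidAlgebra ℂ G) = 1 := map_one _
    rw [h, sub_self]; exact Submodule.zero_mem _
  | mul x y hx hy ihx ihy =>
    have : (MonoidAlgebra.of ℂ G (x * y) : MonoidAlgebra ℂ G) - 1 =
        MonoidAlgebra.of ℂ G x * (MonoidAlgebra.of ℂ G y - 1) +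
          (MonoidAlgebra.of ℂ G x - 1) := by
      rw [map_mul]; ring
    rw [this]
    exact Submodule.add_mem _ (mul_mem_rangeT G h1 h2 h3 _ _ ihy) ihx
  | inv x hx ihx =>
    have : (MonoidAlgebra.of ℂ G x⁻¹ : MonoidAlgebra ℂ G) - 1 =
        -(MonoidAlgebra.of ℂ G x⁻¹ * (MonoidAlgebra.of ℂ G x - 1)) := by
      have : (MonoidAlgebra.of ℂ G x⁻¹ : MonoidAlgebra ℂ G) * MonoidAlgebra.of ℂ G x = 1 := by
        rw [← map_mul, inv_mul_cancel, map_one]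
      rw [mul_sub, this]; ring
    rw [this]
    exact Submodule.neg_mem _ (mul_mem_rangeT G h1 h2 h3 _ _ ihx)

lemma rangeT_eq (hgen : Subgroup.closure {h1, h2, h3} = ⊤) :
    LinearMap.range (Tmap G h1 h2 h3) = LinearMap.ker (augE G) := by
  apply le_antisymm
  · rintro z ⟨⟨b, c, d⟩, rfl⟩
    simp only [LinearMap.mem_ker, Tmap, LinearMap.coe_mk, AddHom.coe_mk]
    have e1 : ∀ (h : G) (x : MonoidAlgebra ℂ G),
        augE G ((MonoidAlgebra.of ℂ G h - 1) * x) = 0 := by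
      intro h x
      rw [sub_mul, one_mul, map_sub, augE_mul_of, sub_self]
    rw [map_add, map_add, e1, e1, e1]; ring
  · intro x hx
    have hsum : x = ∑ g ∈ x.coeff.support, (x.coeff g) • (MonoidAlgebra.single g 1 : MonoidAlgebra ℂ G) := by
      conv_lhs => rw [← MonoidAlgebra.sum_coeff_single x]
      rw [Finsupp.sum]
      congr 1
      ext g
      rw [MonoidAlgebra.smul_single, smul_eq_mul, mul_one]
    have hx0 : augE G x = 0 := hx
    have key : x = ∑ g ∈ x.coeff.support,
        (x.coeff g) • ((MonoidAlgebra.single g 1 : MonoidAlgebra ℂ G) - 1) := by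
      have : ∑ g ∈ x.coeff.support, (x.coeff g) •
          ((MonoidAlgebra.single g 1 : MonoidAlgebra ℂ G) - 1) =
          (∑ g ∈ x.coeff.support, (x.coeff g) • (MonoidAlgebra.single g 1 : MonoidAlgebra ℂ G)) -
          (∑ g ∈ x.coeff.support, x.coeff g) • (1 : MonoidAlgebra ℂ G) := by
        rw [Finset.sum_smul, ← Finset.sum_sub_distrib]
        congr 1; ext g; rw [smul_sub]
      have hs : ∑ g ∈ x.coeff.support, x.coeff g = 0 := by
        have := hx0
        have hform : augE G x = ∑ g ∈ x.coeff.support, x.coeff g := by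
          simp [augE, augA, MonoidAlgebra.lift_apply, Finsupp.sum]
        rw [hform] at this; exact this
      rw [this, hs, zero_smul, sub_zero, ← hsum]
    rw [key]
    apply Submodule.sum_mem
    intro g _
    apply Submodule.smul_mem
    exact of_sub_one_mem G h1 h2 h3 hgen g

end Aux

/-- The map (u,v) ↦ augE v - augE u. -/
noncomputable def Smap (G : Type*) [CommGroup G] :
    (MonoidAlgebra ℂ G × MonoidAlgebra ℂ G) →ₗ[ℂ] ℂ where
  toFun x := augE G x.2 - augE G x.1
  map_add' x y := by simp only [Prod.snd_add, Prod.fst_add, map_add]; ring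
  map_smul' c x := by
    simp only [Prod.smul_snd, Prod.smul_fst, map_smul, RingHom.id_apply, smul_eq_mul]; ring

lemma range_pillowD_eq (G : Type*) [CommGroup G] (h1 h2 h3 : G)
    (hgen : Subgroup.closure {h1, h2, h3} = ⊤) :
    LinearMap.range (pillowD G h1 h2 h3) = LinearMap.ker (Smap G) := by
  apply le_antisymm
  · rintro z ⟨⟨a, b, c, d⟩, rfl⟩
    simp only [LinearMap.mem_ker, pillowD, Smap, LinearMap.coe_mk, AddHom.coe_mk]
    simp only [map_add, augE_mul_of]
    ring
  · rintro ⟨u, v⟩ hm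
    simp only [LinearMap.mem_ker, Smap, LinearMap.coe_mk, AddHom.coe_mk] at hm
    have hvu : v - u ∈ LinearMap.ker (augE G) := by
      rw [LinearMap.mem_ker, map_sub]
      exact hm
    obtain ⟨⟨b, c, d⟩, hT⟩ : v - u ∈ LinearMap.range (Tmap G h1 h2 h3) := by
      rw [rangeT_eq G h1 h2 h3 hgen]; exact hvu
    refine ⟨(u - b - c - d, b, c, d), ?_⟩
    simp only [Tmap, LinearMap.coe_mk, AddHom.coe_mk] at hT
    simp only [pillowD, LinearMap.coe_mk, AddHom.coe_mk, Prod.mk.injEq]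
    constructor
    · ring
    · linear_combination hT

theorem pillowD_rank (G : Type*) [CommGroup G] [Fintype G] (h1 h2 h3 : G)
    (hgen : Subgroup.closure {h1, h2, h3} = ⊤) :
    Module.finrank ℂ (LinearMap.range (pillowD G h1 h2 h3)) = 2 * Fintype.card G - 1 ∧
    Module.finrank ℂ (LinearMap.ker (pillowD G h1 h2 h3)) = 2 * Fintype.card G + 1 := by
  haveI : Module.Finite ℂ (MonoidAlgebra ℂ G) := inferInstance
  have hMA : Module.finrank ℂ (MonoidAlgebra ℂ G) = Fintype.card G := by
    rw [(MonoidAlgebra.coeffLinearEquiv ℂ).finrank_eq]; simp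
  have hcard : 1 ≤ Fintype.card G := Fintype.card_pos
  -- range of Smap is everything
  have hSsurj : LinearMap.range (Smap G) = ⊤ := by
    rw [LinearMap.range_eq_top]
    intro c
    refine ⟨(0, c • 1), ?_⟩
    simp [Smap, augE_one]
  have hSrange : Module.finrank ℂ (LinearMap.range (Smap G)) = 1 := by
    rw [hSsurj, finrank_top, Module.finrank_self]
  have hprod : Module.finrank ℂ (MonoidAlgebra ℂ G × MonoidAlgebra ℂ G) =
      2 * Fintype.card G := by
    rw [Module.finrank_prod, hMA]; ring
  have hrn := LinearMap.finrank_range_add_finrank_ker (Smap G)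
  rw [hSrange, hprod] at hrn
  have hkerS : Module.finrank ℂ (LinearMap.ker (Smap G)) = 2 * Fintype.card G - 1 := by omega
  have hrange : Module.finrank ℂ (LinearMap.range (pillowD G h1 h2 h3)) =
      2 * Fintype.card G - 1 := by
    rw [range_pillowD_eq G h1 h2 h3 hgen, hkerS]
  refine ⟨hrange, ?_⟩
  have hrn2 := LinearMap.finrank_range_add_finrank_ker (pillowD G h1 h2 h3)
  have hprod4 : Module.finrank ℂ (MonoidAlgebra ℂ G × MonoidAlgebra ℂ G ×
      MonoidAlgebra ℂ G × MonoidAlgebra ℂ G) = 4 * Fintype.card G := by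
    rw [Module.finrank_prod, Module.finrank_prod, Module.finrank_prod, hMA]; ring
  rw [hrange, hprod4] at hrn2
  omega
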